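/- Let m > 1 be an odd integer divisible by 3, let E_m be the elliptic curve over ℚ defined by y² = x³ - x + m⁶, and let P = (0, m³) and Q = (-1, m³) be rational points on E_m. Then the images of P and Q generate a subgroup of order 4 in E_m(ℚ)/2E_m(ℚ); equivalently, none of the points P, Q, and P + Q lies in 2E_m(ℚ). -/

import Mathlib

/-- The elliptic curve `E_m : y² = x³ - x + m⁶` over `ℚ`. -/
def Em (m : ℤ) : WeierstrassCurve ℚ := ⟨0, 0, 0, -1, (m : ℚ) ^ 6⟩

/-- The doubling map `P ↦ 2 • P` as an additive group homomorphism; its range is the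
subgroup `2A` of `A`. -/
def doublingHom (A : Type*) [AddCommGroup A] : A →+ A :=
  AddMonoidHom.mk' (fun a => 2 • a) (fun a b => smul_add 2 a b)

namespace EmAux

@[simp] lemma Em_a₁ (m : ℤ) : (Em m).toAffine.a₁ = 0 := rfl
@[simp] lemma Em_a₂ (m : ℤ) : (Em m).toAffine.a₂ = 0 := rfl
@[simp] lemma Em_a₃ (m : ℤ) : (Em m).toAffine.a₃ = 0 := rfl
@[simp] lemma Em_a₄ (m : ℤ) : (Em m).toAffine.a₄ = -1 := rfl
@[simp] lemma Em_a₆ (m : ℤ) : (Em m).toAffine.a₆ = (m:ℚ)^6 := rfl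

lemma zmod3_aux : ∀ A C : ZMod 3, C = 1 ∨ C = -1 → A^4 - 4*C*A^3 + 2*A^2 + 4*C*A + 1 ≠ 0 := by
  decide

lemma zmod16_aux : ∀ A K : ZMod 16, A^4 + 2*A^2 - 8*(2*K+1)^6*A + 1 ≠ 0 := by decide

lemma no_rat_sol (m : ℤ) (hodd : Odd m) (h3 : (3:ℤ) ∣ m) (x y : ℚ) (c : ℤ)
    (hc : c = 0 ∨ c = -1 ∨ c = 1)
    (he : y ^ 2 = x ^ 3 - x + (m:ℚ)^6) (hy : y ≠ 0)
    (hL : ((3 * x ^ 2 - 1) / (2 * y)) ^ 2 - 2 * x = (c:ℚ)) : False := by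
  have h2y : (2*y) ≠ 0 := mul_ne_zero two_ne_zero hy
  have key : (3*x^2-1)^2 = ((c:ℚ) + 2*x) * (2*y)^2 := by
    have h1 : (c:ℚ) + 2*x = ((3*x^2-1)/(2*y))^2 := by linarith
    rw [h1, div_pow, div_mul_cancel₀ _ (pow_ne_zero 2 h2y)]
  have hpoly : x^4 - 4*(c:ℚ)*x^3 + 2*x^2 - (8*(m:ℚ)^6 - 4*(c:ℚ))*x + (1 - 4*(c:ℚ)*(m:ℚ)^6) = 0 := by
    linear_combination key + 4*((c:ℚ)+2*x)*he
  -- pass to num/den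
  set a : ℤ := x.num with ha
  set b : ℤ := (x.den : ℤ) with hb
  have hbQ : ((x.den : ℕ) : ℚ) ≠ 0 := Nat.cast_ne_zero.mpr x.den_nz
  have hxab : (a:ℚ) = x * (b:ℚ) := by
    rw [ha, hb]
    push_cast
    exact (div_eq_iff hbQ).mp x.num_div_den
  have hint : (a:ℚ)^4 - 4*(c:ℚ)*(a:ℚ)^3*(b:ℚ) + 2*(a:ℚ)^2*(b:ℚ)^2
      - (8*(m:ℚ)^6 - 4*(c:ℚ))*(a:ℚ)*(b:ℚ)^3 + (1 - 4*(c:ℚ)*(m:ℚ)^6)*(b:ℚ)^4 = 0 := by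
    rw [hxab]
    linear_combination (b:ℚ)^4 * hpoly
  have hZ : a^4 - 4*c*a^3*b + 2*a^2*b^2 - (8*m^6 - 4*c)*a*b^3 + (1 - 4*c*m^6)*b^4 = 0 := by
    exact_mod_cast hint
  -- b = 1
  have hdvd : b ∣ a^4 := ⟨4*c*a^3 - 2*a^2*b + (8*m^6-4*c)*a*b^2 - (1-4*c*m^6)*b^3, by
    linear_combination hZ⟩
  have hden1 : x.den = 1 := by
    have h1 : x.den ∣ x.num.natAbs ^ 4 := by
      have := Int.natAbs_dvd_natAbs.mpr hdvd
      simpa [Int.natAbs_pow, ha, hb] using this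
    exact (Nat.Coprime.pow_right 4 x.reduced.symm).eq_one_of_dvd h1
  have hb1 : b = 1 := by rw [hb, hden1]; rfl
  rw [hb1] at hZ
  have hZ' : a^4 - 4*c*a^3 + 2*a^2 - (8*m^6 - 4*c)*a + (1 - 4*c*m^6) = 0 := by
    linear_combination hZ
  rcases hc with rfl | hc1
  · -- c = 0 : mod 16
    obtain ⟨k, hk⟩ := hodd
    rw [hk] at hZ'
    have h16 := congrArg (fun z : ℤ => (z : ZMod 16)) hZ'
    push_cast at h16
    exact zmod16_aux (a : ZMod 16) (k : ZMod 16) (by linear_combination h16)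
  · -- c = ±1 : mod 3
    have hm3 : ((m : ZMod 3)) = 0 := by
      exact_mod_cast (ZMod.intCast_zmod_eq_zero_iff_dvd m 3).mpr h3
    have h3' : ((a : ZMod 3))^4 - 4*(c:ZMod 3)*(a:ZMod 3)^3 + 2*(a:ZMod 3)^2 + 4*(c:ZMod 3)*(a:ZMod 3) + 1 = 0 := by
      have := congrArg (fun z : ℤ => (z : ZMod 3)) hZ'
      push_cast at this
      rw [hm3] at this
      linear_combination this
    have hcc : (c : ZMod 3) = 1 ∨ (c : ZMod 3) = -1 := by
      rcases hc1 with rfl | rfl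
      · right; push_cast; ring
      · left; push_cast; ring
    exact zmod3_aux _ _ hcc h3'

open WeierstrassCurve.Affine WeierstrassCurve.Affine.Point in
lemma not_in_range (m : ℤ) (hodd : Odd m) (h3 : (3:ℤ) ∣ m) {x₀ y₀ : ℚ}
    (h0 : (Em m).toAffine.Nonsingular x₀ y₀) (hx₀ : x₀ = 0 ∨ x₀ = -1 ∨ x₀ = 1) :
    WeierstrassCurve.Affine.Point.some (h := h0) ∉ (doublingHom (Em m).toAffine.Point).range := by
  rintro ⟨S, hS⟩
  have hS' : S + S = WeierstrassCurve.Affine.Point.some (h := h0) := by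
    rw [← hS]; exact (two_nsmul S).symm
  induction S with
  | zero =>
      rw [← WeierstrassCurve.Affine.Point.zero_def, add_zero] at hS'
      exact WeierstrassCurve.Affine.Point.some_ne_zero h0 hS'.symm
  | @some x y h =>
      by_cases hy : y = (Em m).toAffine.negY x y
      · rw [add_self_of_Y_eq hy] at hS'
        exact WeierstrassCurve.Affine.Point.some_ne_zero h0 hS'.symm
      · rw [add_self_of_Y_ne hy] at hS'
        have hx : (Em m).toAffine.addX x x ((Em m).toAffine.slope x x y y) = x₀ := by
          injection hS'
        have hy0 : y ≠ 0 := by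
          intro h'; apply hy; rw [h']; simp [WeierstrassCurve.Affine.negY]
        have hsl : (Em m).toAffine.slope x x y y = (3 * x ^ 2 - 1) / (2 * y) := by
          rw [slope_of_Y_ne rfl hy]
          simp [WeierstrassCurve.Affine.negY]
          ring_nf
        have he : y ^ 2 = x ^ 3 - x + (m:ℚ)^6 := by
          have := h.1
          rw [WeierstrassCurve.Affine.equation_iff] at this
          simp only [Em_a₁, Em_a₂, Em_a₃, Em_a₄, Em_a₆] at this
          linear_combination this
        rw [WeierstrassCurve.Affine.addX, hsl] at hx
        simp only [Em_a₁, Em_a₂] at hx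
        obtain ⟨c, hc, rfl⟩ : ∃ c : ℤ, (c = 0 ∨ c = -1 ∨ c = 1) ∧ x₀ = (c:ℚ) := by
          rcases hx₀ with rfl | rfl | rfl
          · exact ⟨0, Or.inl rfl, by norm_num⟩
          · exact ⟨-1, Or.inr (Or.inl rfl), by norm_num⟩
          · exact ⟨1, Or.inr (Or.inr rfl), by norm_num⟩
        exact no_rat_sol m hodd h3 x y c hc he hy0 (by linear_combination hx)


end EmAux

open WeierstrassCurve.Affine WeierstrassCurve.Affine.Point EmAux

/-- For `m > 1` odd and divisible by `3`, the images of `P = (0, m³)` and `Q = (-1, m³)`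
generate a subgroup of order `4` in `E_m(ℚ)/2E_m(ℚ)`; equivalently, none of `P`, `Q` and
`P + Q` lies in `2E_m(ℚ)`. -/
theorem Em_P_Q_generate_order_four
    (m : ℤ) (hm : 1 < m) (hodd : Odd m) (h3 : (3 : ℤ) ∣ m)
    (hP : (Em m).toAffine.Nonsingular 0 ((m : ℚ) ^ 3))
    (hQ : (Em m).toAffine.Nonsingular (-1) ((m : ℚ) ^ 3)) :
    Nat.card ↥(AddSubgroup.closure
        {QuotientAddGroup.mk' (doublingHom (Em m).toAffine.Point).range
          (WeierstrassCurve.Affine.Point.some (h := hP)),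
         QuotientAddGroup.mk' (doublingHom (Em m).toAffine.Point).range
          (WeierstrassCurve.Affine.Point.some (h := hQ))}) = 4 ∧
      WeierstrassCurve.Affine.Point.some (h := hP) ∉ (doublingHom (Em m).toAffine.Point).range ∧
      WeierstrassCurve.Affine.Point.some (h := hQ) ∉ (doublingHom (Em m).toAffine.Point).range ∧
      WeierstrassCurve.Affine.Point.some (h := hP) + WeierstrassCurve.Affine.Point.some (h := hQ) ∉
        (doublingHom (Em m).toAffine.Point).range := by
  have hNP : WeierstrassCurve.Affine.Point.some (h := hP) ∉ (doublingHom (Em m).toAffine.Point).range :=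
    not_in_range m hodd h3 hP (Or.inl rfl)
  have hNQ : WeierstrassCurve.Affine.Point.some (h := hQ) ∉ (doublingHom (Em m).toAffine.Point).range :=
    not_in_range m hodd h3 hQ (Or.inr (Or.inl rfl))
  have hxne : (0 : ℚ) ≠ -1 := by norm_num
  have hPQeq : WeierstrassCurve.Affine.Point.some (h := hP) + WeierstrassCurve.Affine.Point.some (h := hQ) =
      WeierstrassCurve.Affine.Point.some _ _
        (nonsingular_add hP hQ fun h => (hxne h.1).elim) := add_of_X_ne hxne
  have hNPQ : WeierstrassCurve.Affine.Point.some (h := hP) + WeierstrassCurve.Affine.Point.some (h := hQ) ∉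
      (doublingHom (Em m).toAffine.Point).range := by
    rw [hPQeq]
    apply not_in_range m hodd h3 _ (Or.inr (Or.inr ?_))
    rw [slope_of_X_ne hxne, WeierstrassCurve.Affine.addX]
    show _ + (Em m).a₁ * _ - (Em m).a₂ - _ - _ = _
    show _ + (0:ℚ) * _ - (0:ℚ) - _ - _ = _
    norm_num
  refine ⟨?_, hNP, hNQ, hNPQ⟩
  -- the quotient group part
  set A := (Em m).toAffine.Point
  set R := (doublingHom A).range with hR
  set π := QuotientAddGroup.mk' R with hπ
  set p := π (WeierstrassCurve.Affine.Point.some (h := hP)) with hp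
  set q := π (WeierstrassCurve.Affine.Point.some (h := hQ)) with hq
  have two : ∀ z : A ⧸ R, z + z = 0 := by
    intro z
    induction z using QuotientAddGroup.induction_on with
    | H a =>
      have : a + a ∈ R := ⟨a, two_nsmul a⟩
      rw [← QuotientAddGroup.mk_add]
      exact (QuotientAddGroup.eq_zero_iff _).mpr this
  have hp0 : p ≠ 0 := fun h => hNP ((QuotientAddGroup.eq_zero_iff _).mp h)
  have hq0 : q ≠ 0 := fun h => hNQ ((QuotientAddGroup.eq_zero_iff _).mp h)
  have hpq0 : p + q ≠ 0 := by
    intro h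
    rw [hp, hq, ← map_add] at h
    exact hNPQ ((QuotientAddGroup.eq_zero_iff _).mp h)
  have hppq : p ≠ q := by
    intro h
    exact hpq0 (by rw [h]; exact two q)
  have hp_pq : p ≠ p + q := fun h => hq0 (by
    have := congrArg (fun z => -p + z) h
    simpa using this.symm)
  have hq_pq : q ≠ p + q := fun h => hp0 (by
    have := congrArg (fun z => z - q) h
    simpa using this.symm)
  have table : ∀ u v : A ⧸ R, (u = 0 ∨ u = p ∨ u = q ∨ u = p + q) →
      (v = 0 ∨ v = p ∨ v = q ∨ v = p + q) →
      (u + v = 0 ∨ u + v = p ∨ u + v = q ∨ u + v = p + q) := by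
    rintro u v (rfl|rfl|rfl|rfl) (rfl|rfl|rfl|rfl)
    · left; rw [add_zero]
    · right; left; rw [zero_add]
    · right; right; left; rw [zero_add]
    · right; right; right; rw [zero_add]
    · right; left; rw [add_zero]
    · left; exact two p
    · right; right; right; rfl
    · right; right; left; rw [← add_assoc, two p, zero_add]
    · right; right; left; rw [add_zero]
    · right; right; right; rw [add_comm]
    · left; exact two q
    · right; left; rw [add_comm p q, ← add_assoc, two q, zero_add]
    · right; right; right; rw [add_zero]
    · right; right; left; rw [add_comm, ← add_assoc, two p, zero_add]
    · right; left; rw [add_assoc, two q, add_zero]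
    · left; exact two _
  have hKset : ((AddSubgroup.closure {p, q} : AddSubgroup (A ⧸ R)) : Set (A ⧸ R))
      = {0, p, q, p + q} := by
    apply le_antisymm
    · intro z hz
      simp only [Set.mem_insert_iff, Set.mem_singleton_iff]
      induction hz using AddSubgroup.closure_induction with
      | mem z hzz =>
        rcases hzz with rfl | rfl
        · exact Or.inr (Or.inl rfl)
        · exact Or.inr (Or.inr (Or.inl rfl))
      | zero => exact Or.inl rfl
      | add a b ha hb hha hhb => exact table a b hha hhb
      | neg a ha hha =>
        have hne : -a = a := neg_eq_of_add_eq_zero_left (two a)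
        rw [hne]
        exact hha
    · intro z hz
      have hpK : p ∈ AddSubgroup.closure {p, q} :=
        AddSubgroup.subset_closure (Or.inl rfl)
      have hqK : q ∈ AddSubgroup.closure {p, q} :=
        AddSubgroup.subset_closure (Or.inr rfl)
      rcases hz with rfl | rfl | rfl | rfl
      · exact AddSubgroup.zero_mem _
      · exact hpK
      · exact hqK
      · exact AddSubgroup.add_mem _ hpK hqK
  rw [← SetLike.coe_sort_coe, hKset]
  rw [Nat.card_coe_set_eq]
  rw [Set.ncard_insert_of_notMem (by simp [hp0.symm, hq0.symm, hpq0.symm]),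
      Set.ncard_insert_of_notMem (by simp [hppq, hp_pq]),
      Set.ncard_insert_of_notMem (by simp [hq_pq]),
      Set.ncard_singleton]
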